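/- For all n ≥ 0 and r ≥ 0, p^{r+1}_1(n) = 2·p^r_1(n) − r^n, where p^r_1(n) := ∑_{s=0}^{n} C(n,s) · J^0_s · r^{n−s} and J^0_s is the s-th Fubini number. -/

import Mathlib

/-- Stirling numbers of the second kind. -/
def stirling : ℕ → ℕ → ℕ
  | 0, 0 => 1
  | 0, _ + 1 => 0
  | _ + 1, 0 => 0
  | n + 1, s + 1 => (s + 1) * stirling n (s + 1) + stirling n s

/-- `J k n`: the number of barred preferential arrangements of an `n`-set with `k` bars,
given by its closed form `∑ S(n,s)·s!·C(k+s,s)`. -/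
def J (k n : ℕ) : ℕ :=
  ∑ s ∈ Finset.range (n + 1), stirling n s * s.factorial * (k + s).choose s

/-- `p k n`: barred preferential arrangements with `k` bars, one free section and
`k` restricted sections. -/
def p (k n : ℕ) : ℕ :=
  ∑ s ∈ Finset.range (n + 1), n.choose s * J 0 s * k ^ (n - s)

/-- `bb n s = S(n,s)·s!`, the number of ordered set partitions of an `n`-set into `s` blocks. -/
def bb (n s : ℕ) : ℕ := stirling n s * s.factorial

lemma stirling_eq_zero_of_lt : ∀ {n s : ℕ}, n < s → stirling n s = 0 := by
  intro n
  induction n with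
  | zero => intro s h; cases s with
      | zero => omega
      | succ t => simp [stirling]
  | succ m ih =>
    intro s h
    cases s with
    | zero => omega
    | succ t =>
      have h1 : m < t + 1 := by omega
      have h2 : m < t := by omega
      simp [stirling, ih h1, ih h2]

lemma bb_succ_succ (n s : ℕ) : bb (n + 1) (s + 1) = (s + 1) * (bb n (s + 1) + bb n s) := by
  simp only [bb, stirling, Nat.factorial_succ]
  ring

lemma bb_eq_zero_of_lt {n s : ℕ} (h : n < s) : bb n s = 0 := by
  simp [bb, stirling_eq_zero_of_lt h]

lemma key : ∀ n s : ℕ, ∑ j ∈ Finset.range (n + 1), n.choose j * bb j s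
    = bb n (s + 1) + bb n s := by
  intro n
  induction n with
  | zero => intro s; simp [bb, stirling]
  | succ n ih =>
    intro s
    rw [Finset.sum_range_succ']
    have hsplit : ∀ j ∈ Finset.range (n + 1), (n + 1).choose (j + 1) * bb (j + 1) s
        = n.choose j * bb (j + 1) s + n.choose (j + 1) * bb (j + 1) s := by
      intro j _; rw [Nat.choose_succ_succ']; ring
    rw [Finset.sum_congr rfl hsplit, Finset.sum_add_distrib]
    have hB : (∑ j ∈ Finset.range (n + 1), n.choose (j + 1) * bb (j + 1) s)
        + (n + 1).choose 0 * bb 0 s = bb n (s + 1) + bb n s := by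
      rw [Nat.choose_zero_right]
      have h0 : (1 : ℕ) * bb 0 s = n.choose 0 * bb 0 s := by simp
      rw [h0, ← Finset.sum_range_succ' (fun j => n.choose j * bb j s) (n + 1),
        Finset.sum_range_succ, Nat.choose_succ_self, zero_mul, add_zero, ih]
    have hA : (∑ j ∈ Finset.range (n + 1), n.choose j * bb (j + 1) s)
        + (bb n (s + 1) + bb n s) = bb (n + 1) (s + 1) + bb (n + 1) s := by
      cases s with
      | zero =>
        have hz : ∀ j ∈ Finset.range (n + 1), n.choose j * bb (j + 1) 0 = 0 := by
          intro j _; simp [bb, stirling]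
        rw [Finset.sum_congr rfl hz, Finset.sum_const_zero, zero_add]
        have h1 : bb (n + 1) 1 = 1 * (bb n 1 + bb n 0) := bb_succ_succ n 0
        have h2 : bb (n + 1) 0 = 0 := by simp [bb, stirling]
        rw [h1, h2]; ring
      | succ t =>
        have hz : ∀ j ∈ Finset.range (n + 1), n.choose j * bb (j + 1) (t + 1)
            = (t + 1) * (n.choose j * bb j (t + 1)) + (t + 1) * (n.choose j * bb j t) := by
          intro j _; rw [bb_succ_succ]; ring
        rw [Finset.sum_congr rfl hz, Finset.sum_add_distrib, ← Finset.mul_sum,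
          ← Finset.mul_sum, ih, ih, bb_succ_succ n (t + 1), bb_succ_succ n t]
        ring
    calc (∑ j ∈ Finset.range (n + 1), n.choose j * bb (j + 1) s)
          + (∑ j ∈ Finset.range (n + 1), n.choose (j + 1) * bb (j + 1) s)
          + (n + 1).choose 0 * bb 0 s
        = (∑ j ∈ Finset.range (n + 1), n.choose j * bb (j + 1) s)
          + ((∑ j ∈ Finset.range (n + 1), n.choose (j + 1) * bb (j + 1) s)
            + (n + 1).choose 0 * bb 0 s) := by ring
      _ = (∑ j ∈ Finset.range (n + 1), n.choose j * bb (j + 1) s)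
          + (bb n (s + 1) + bb n s) := by rw [hB]
      _ = bb (n + 1) (s + 1) + bb (n + 1) s := hA

lemma J0_eq (m : ℕ) : J 0 m = ∑ s ∈ Finset.range (m + 1), bb m s := by
  simp [J, bb]

lemma J0_eq_pad {m n : ℕ} (h : m ≤ n) : J 0 m = ∑ s ∈ Finset.range (n + 1), bb m s := by
  rw [J0_eq]
  apply Finset.sum_subset
  · intro x hx
    simp only [Finset.mem_range] at *
    omega
  · intro x _ hx
    simp only [Finset.mem_range] at hx
    exact bb_eq_zero_of_lt (by omega)

lemma bb_zero_eq (n : ℕ) : bb n 0 = 0 ^ n := by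
  cases n <;> simp [bb, stirling]

/-- Fubini recurrence: `∑ C(n,j)·J0(j) + 0^n = 2·J0(n)`. -/
lemma fubini (n : ℕ) :
    (∑ j ∈ Finset.range (n + 1), n.choose j * J 0 j) + 0 ^ n = 2 * J 0 n := by
  have h1 : (∑ j ∈ Finset.range (n + 1), n.choose j * J 0 j)
      = ∑ s ∈ Finset.range (n + 1), ∑ j ∈ Finset.range (n + 1), n.choose j * bb j s := by
    rw [Finset.sum_comm]
    apply Finset.sum_congr rfl
    intro j hj
    simp only [Finset.mem_range] at hj
    rw [J0_eq_pad (by omega : j ≤ n), Finset.mul_sum]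
  rw [h1]
  have h2 : ∀ s ∈ Finset.range (n + 1),
      (∑ j ∈ Finset.range (n + 1), n.choose j * bb j s) = bb n (s + 1) + bb n s := by
    intro s _; exact key n s
  rw [Finset.sum_congr rfl h2, Finset.sum_add_distrib]
  have h3 : (∑ s ∈ Finset.range (n + 1), bb n (s + 1)) + 0 ^ n
      = ∑ s ∈ Finset.range (n + 1), bb n s := by
    rw [← bb_zero_eq, ← Finset.sum_range_succ' (fun s => bb n s) (n + 1),
      Finset.sum_range_succ, bb_eq_zero_of_lt (by omega : n < n + 1), add_zero]
  have h4 : (∑ s ∈ Finset.range (n + 1), bb n s) = J 0 n := (J0_eq n).symm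
  calc (∑ s ∈ Finset.range (n + 1), bb n (s + 1))
        + (∑ s ∈ Finset.range (n + 1), bb n s) + 0 ^ n
      = ((∑ s ∈ Finset.range (n + 1), bb n (s + 1)) + 0 ^ n)
        + (∑ s ∈ Finset.range (n + 1), bb n s) := by ring
    _ = (∑ s ∈ Finset.range (n + 1), bb n s)
        + (∑ s ∈ Finset.range (n + 1), bb n s) := by rw [h3]
    _ = 2 * J 0 n := by rw [h4]; ring

lemma choose_swap {n s j : ℕ} (hs : s ≤ n) (hj : j ≤ n) :
    n.choose s * (n - s).choose (n - j) = n.choose j * j.choose s := by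
  by_cases h : s ≤ j
  · have h1 : n.choose j * j.choose s = n.choose s * (n - s).choose (j - s) :=
      Nat.choose_mul h
    have h2 : (n - s).choose (n - j) = (n - s).choose (j - s) := by
      have : n - j = (n - s) - (j - s) := by omega
      rw [this, Nat.choose_symm (by omega)]
    rw [h2, h1]
  · have h1 : j.choose s = 0 := Nat.choose_eq_zero_of_lt (by omega)
    have h2 : (n - s).choose (n - j) = 0 := Nat.choose_eq_zero_of_lt (by omega)
    rw [h1, h2]; ring

lemma nat_version (n r : ℕ) : p (r + 1) n + r ^ n = 2 * p r n := by
  have hmain : p (r + 1) n = ∑ j ∈ Finset.range (n + 1),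
      (n.choose j * r ^ (n - j)) * ∑ s ∈ Finset.range (n + 1), j.choose s * J 0 s := by
    calc p (r + 1) n
        = ∑ s ∈ Finset.range (n + 1), n.choose s * J 0 s * (r + 1) ^ (n - s) := rfl
      _ = ∑ s ∈ Finset.range (n + 1), ∑ k ∈ Finset.range (n - s + 1),
            n.choose s * J 0 s * (r ^ k * (n - s).choose k) := by
          apply Finset.sum_congr rfl
          intro s _
          rw [add_pow, Finset.mul_sum]
          simp [mul_assoc]
      _ = ∑ s ∈ Finset.range (n + 1), ∑ k ∈ Finset.range (n + 1),
            n.choose s * J 0 s * (r ^ k * (n - s).choose k) := by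
          apply Finset.sum_congr rfl
          intro s hs
          simp only [Finset.mem_range] at hs
          apply Finset.sum_subset
          · intro x hx; simp only [Finset.mem_range] at *; omega
          · intro x _ hx
            simp only [Finset.mem_range] at hx
            have hz : (n - s).choose x = 0 := Nat.choose_eq_zero_of_lt (by omega)
            rw [hz]
            ring
      _ = ∑ s ∈ Finset.range (n + 1), ∑ k ∈ Finset.range (n + 1),
            n.choose s * J 0 s * (r ^ (n - k) * (n - s).choose (n - k)) := by
          apply Finset.sum_congr rfl
          intro s _
          rw [← Finset.sum_range_reflect]
          simp
      _ = ∑ j ∈ Finset.range (n + 1), ∑ s ∈ Finset.range (n + 1),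
            n.choose s * J 0 s * (r ^ (n - j) * (n - s).choose (n - j)) := Finset.sum_comm
      _ = ∑ j ∈ Finset.range (n + 1),
            (n.choose j * r ^ (n - j)) * ∑ s ∈ Finset.range (n + 1), j.choose s * J 0 s := by
          apply Finset.sum_congr rfl
          intro j hj
          rw [Finset.mul_sum]
          apply Finset.sum_congr rfl
          intro s hs
          simp only [Finset.mem_range] at hj hs
          have := choose_swap (by omega : s ≤ n) (by omega : j ≤ n)
          calc n.choose s * J 0 s * (r ^ (n - j) * (n - s).choose (n - j))
              = (n.choose s * (n - s).choose (n - j)) * (J 0 s * r ^ (n - j)) := by ring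
            _ = (n.choose j * j.choose s) * (J 0 s * r ^ (n - j)) := by rw [this]
            _ = n.choose j * r ^ (n - j) * (j.choose s * J 0 s) := by ring
  have hpow : (∑ j ∈ Finset.range (n + 1), (n.choose j * r ^ (n - j)) * 0 ^ j) = r ^ n := by
    rw [Finset.sum_range_succ']
    simp
  calc p (r + 1) n + r ^ n
      = (∑ j ∈ Finset.range (n + 1),
          (n.choose j * r ^ (n - j)) * ∑ s ∈ Finset.range (n + 1), j.choose s * J 0 s)
        + ∑ j ∈ Finset.range (n + 1), (n.choose j * r ^ (n - j)) * 0 ^ j := by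
        rw [hmain, hpow]
    _ = ∑ j ∈ Finset.range (n + 1), (n.choose j * r ^ (n - j))
          * ((∑ s ∈ Finset.range (n + 1), j.choose s * J 0 s) + 0 ^ j) := by
        rw [← Finset.sum_add_distrib]
        apply Finset.sum_congr rfl
        intro j _; rw [mul_add]
    _ = ∑ j ∈ Finset.range (n + 1), (n.choose j * r ^ (n - j)) * (2 * J 0 j) := by
        apply Finset.sum_congr rfl
        intro j hj
        simp only [Finset.mem_range] at hj
        congr 1
        have hpad : (∑ s ∈ Finset.range (n + 1), j.choose s * J 0 s)
            = ∑ s ∈ Finset.range (j + 1), j.choose s * J 0 s := by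
          symm
          apply Finset.sum_subset
          · intro x hx; simp only [Finset.mem_range] at *; omega
          · intro x _ hx
            simp only [Finset.mem_range] at hx
            rw [Nat.choose_eq_zero_of_lt (by omega), zero_mul]
        rw [hpad]
        exact fubini j
    _ = 2 * p r n := by
        rw [p, Finset.mul_sum]
        apply Finset.sum_congr rfl
        intro j _; ring

theorem stmt_14 (n r : ℕ) :
    (p (r + 1) n : ℤ) = 2 * p r n - (r : ℤ) ^ n := by
  have h := nat_version n r
  have : (p (r + 1) n : ℤ) + (r : ℤ) ^ n = 2 * p r n := by exact_mod_cast congrArg (Nat.cast : ℕ → ℤ) h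
  linarith
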